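/- Let n be a positive integer, a = (a_1,...,a_n) and b = (b_1,...,b_n) be n-tuples of complex numbers, p = (p_1,...,p_n) nonnegative real weights with ∑_{i=1}^n p_i = 1, and r > 0 such that ∑_{i=1}^n p_i |b_i - conj(a_i)|^2 ≤ r^2 < ∑_{i=1}^n p_i |a_i|^2. Then 0 ≤ (∑_{i=1}^n p_i |a_i|^2)(∑_{i=1}^n p_i |b_i|^2) - | ∑_{i=1}^n p_i a_i b_i |^2 ≤ (∑_{i=1}^n p_i |a_i|^2)(∑_{i=1}^n p_i |b_i|^2) - ( Re[ ∑_{i=1}^n p_i a_i b_i ] )^2 ≤ r^2 · ∑_{i=1}^n p_i |b_i|^2. -/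

import Mathlib

theorem stmt_14 (n : ℕ) (hn : 0 < n) (a b : Fin n → ℂ) (p : Fin n → ℝ)
    (hp : ∀ k, 0 ≤ p k) (hp1 : ∑ i, p i = 1) (r : ℝ) (hr : 0 < r)
    (h1 : ∑ i, p i * ‖b i - (starRingEnd ℂ) (a i)‖ ^ 2 ≤ r ^ 2)
    (h2 : r ^ 2 < ∑ i, p i * ‖a i‖ ^ 2) :
    0 ≤ (∑ i, p i * ‖a i‖ ^ 2) * (∑ i, p i * ‖b i‖ ^ 2)
        - ‖∑ i, (p i : ℂ) * a i * b i‖ ^ 2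
    ∧ (∑ i, p i * ‖a i‖ ^ 2) * (∑ i, p i * ‖b i‖ ^ 2)
        - ‖∑ i, (p i : ℂ) * a i * b i‖ ^ 2
      ≤ (∑ i, p i * ‖a i‖ ^ 2) * (∑ i, p i * ‖b i‖ ^ 2)
        - (∑ i, (p i : ℂ) * a i * b i).re ^ 2
    ∧ (∑ i, p i * ‖a i‖ ^ 2) * (∑ i, p i * ‖b i‖ ^ 2)
        - (∑ i, (p i : ℂ) * a i * b i).re ^ 2
      ≤ r ^ 2 * ∑ i, p i * ‖b i‖ ^ 2 := by
  set A := ∑ i, p i * ‖a i‖ ^ 2 with hA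
  set B := ∑ i, p i * ‖b i‖ ^ 2 with hB
  set S := ∑ i, (p i : ℂ) * a i * b i with hS
  have hB0 : 0 ≤ B := Finset.sum_nonneg fun i _ =>
    mul_nonneg (hp i) (by positivity)
  -- Cauchy-Schwarz part
  have habs : ‖S‖ ≤ ∑ i, p i * (‖a i‖ * ‖b i‖) := by
    refine le_trans (norm_sum_le _ _) (le_of_eq (Finset.sum_congr rfl fun i _ => ?_))
    simp [map_mul, Complex.norm_real, Real.norm_eq_abs, abs_of_nonneg (hp i), mul_assoc]
  have hCS : (∑ i, p i * (‖a i‖ * ‖b i‖)) ^ 2 ≤ A * B := by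
    have h := Finset.sum_mul_sq_le_sq_mul_sq Finset.univ
      (fun i => Real.sqrt (p i) * ‖a i‖)
      (fun i => Real.sqrt (p i) * ‖b i‖)
    have e1 : ∀ i : Fin n, (Real.sqrt (p i) * ‖a i‖) *
        (Real.sqrt (p i) * ‖b i‖) = p i * (‖a i‖ * ‖b i‖) := by
      intro i
      rw [show Real.sqrt (p i) * ‖a i‖ * (Real.sqrt (p i) * ‖b i‖)
          = (Real.sqrt (p i) * Real.sqrt (p i)) * (‖a i‖ * ‖b i‖) by ring,
        Real.mul_self_sqrt (hp i)]
    have e2 : ∀ (c : Fin n → ℂ) (i : Fin n),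
        (Real.sqrt (p i) * ‖c i‖) ^ 2 = p i * ‖c i‖ ^ 2 := by
      intro c i
      rw [mul_pow, Real.sq_sqrt (hp i)]
    calc (∑ i, p i * (‖a i‖ * ‖b i‖)) ^ 2
        = (∑ i, (Real.sqrt (p i) * ‖a i‖) *
            (Real.sqrt (p i) * ‖b i‖)) ^ 2 := by
          congr 1; exact (Finset.sum_congr rfl fun i _ => (e1 i)).symm
      _ ≤ (∑ i, (Real.sqrt (p i) * ‖a i‖) ^ 2) *
            (∑ i, (Real.sqrt (p i) * ‖b i‖) ^ 2) := h
      _ = A * B := by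
          rw [hA, hB]
          congr 1 <;> exact Finset.sum_congr rfl fun i _ => e2 _ i
  have hSsq : ‖S‖ ^ 2 ≤ A * B := by
    have h0 : 0 ≤ ‖S‖ := norm_nonneg _
    have := pow_le_pow_left₀ h0 habs 2
    linarith
  -- |S|^2 = re^2 + im^2
  have hsq : ‖S‖ ^ 2 = S.re ^ 2 + S.im ^ 2 := by
    rw [Complex.sq_norm, Complex.normSq_apply]; ring
  -- identity for h1
  have hRe : S.re = ∑ i, p i * (a i * b i).re := by
    rw [hS, Complex.re_sum]
    refine Finset.sum_congr rfl fun i _ => ?_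
    simp [mul_assoc, Complex.mul_re]
  have hId : ∑ i, p i * ‖b i - (starRingEnd ℂ) (a i)‖ ^ 2
      = B + A - 2 * S.re := by
    rw [hRe, hA, hB, ← Finset.sum_add_distrib, Finset.mul_sum, ← Finset.sum_sub_distrib]
    refine Finset.sum_congr rfl fun i _ => ?_
    rw [Complex.sq_norm, Complex.sq_norm, Complex.sq_norm, Complex.normSq_sub]
    have : ((starRingEnd ℂ) ((starRingEnd ℂ) (a i))) = a i := Complex.conj_conj _
    rw [Complex.normSq_conj, this]
    have hre : (b i * a i).re = (a i * b i).re := by rw [mul_comm]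
    rw [hre]
    ring
  rw [hId] at h1
  refine ⟨by linarith, by nlinarith [sq_nonneg S.im], ?_⟩
  nlinarith [sq_nonneg (S.re - B), hB0]
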